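/- Suppose N : (sequences) × (sequences) → ℚ satisfies the Caporaso–Harris type recursion N(α, β) = Σ_{k : β_k > 0} k · N(α + e_k, β − e_k) whenever |β| > 1, and the base case N(α, e_k) = k² · M(α + e_k) for a function M depending only on α + β. Then for all α, β with |β| ≥ 1, N(α, β) = I^β · Iβ · (|β|−1)!/β! · M(α + β), where I^β = Π k^{β_k}, Iβ = Σ k·β_k, |β| = Σ β_k, β! = Π (β_k!). -/

import Mathlib

open Finsupp

/-- `|β| = Σ β_k`. -/
def absSum (β : ℕ+ →₀ ℕ) : ℕ := β.sum fun _ n => n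

/-- `Iβ = Σ k·β_k`. -/
def wtSum (β : ℕ+ →₀ ℕ) : ℕ := β.sum fun k n => (k : ℕ) * n

/-- `I^β = Π k^{β_k}`. -/
def wtProd (β : ℕ+ →₀ ℕ) : ℕ := β.prod fun k n => (k : ℕ) ^ n

/-- `β! = Π β_k!`. -/
def factProd (β : ℕ+ →₀ ℕ) : ℕ := β.prod fun _ n => n.factorial

lemma erase_sub_single (β : ℕ+ →₀ ℕ) (k : ℕ+) :
    Finsupp.erase k (β - Finsupp.single k 1) = Finsupp.erase k β := by
  ext a
  rcases eq_or_ne a k with h | h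
  · simp [Finsupp.erase_apply, h]
  · simp [Finsupp.erase_apply, Finsupp.tsub_apply, Finsupp.single_apply, h, Ne.symm h]

lemma apply_sub_single (β : ℕ+ →₀ ℕ) (k : ℕ+) :
    (β - Finsupp.single k 1 : ℕ+ →₀ ℕ) k = β k - 1 := by
  simp [Finsupp.tsub_apply]

lemma absSum_sub_single (β : ℕ+ →₀ ℕ) (k : ℕ+) (hk : β k ≠ 0) :
    absSum (β - Finsupp.single k 1) + 1 = absSum β := by
  unfold absSum
  rw [← Finsupp.add_sum_erase' β k (fun _ n => n) (fun _ => rfl),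
    ← Finsupp.add_sum_erase' (β - Finsupp.single k 1 : ℕ+ →₀ ℕ) k (fun _ n => n) (fun _ => rfl),
    erase_sub_single, apply_sub_single]
  omega

lemma wtSum_sub_single (β : ℕ+ →₀ ℕ) (k : ℕ+) (hk : β k ≠ 0) :
    wtSum (β - Finsupp.single k 1) + k = wtSum β := by
  unfold wtSum
  rw [← Finsupp.add_sum_erase' β k (fun k n => (k : ℕ) * n) (fun _ => by simp),
    ← Finsupp.add_sum_erase' (β - Finsupp.single k 1 : ℕ+ →₀ ℕ) k (fun k n => (k : ℕ) * n)
      (fun _ => by simp),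
    erase_sub_single, apply_sub_single]
  have h1 : (k : ℕ) * (β k - 1) + k = k * β k := by
    have h2 : (β k - 1) + 1 = β k := Nat.succ_pred_eq_of_pos (Nat.pos_of_ne_zero hk)
    calc (k : ℕ) * (β k - 1) + k = k * ((β k - 1) + 1) := by ring
    _ = (k : ℕ) * β k := by rw [h2]
  rw [← h1]
  ring

lemma wtProd_sub_single (β : ℕ+ →₀ ℕ) (k : ℕ+) (hk : β k ≠ 0) :
    (k : ℕ) * wtProd (β - Finsupp.single k 1) = wtProd β := by
  unfold wtProd
  rw [← Finsupp.mul_prod_erase' β k (fun k n => (k : ℕ) ^ n) (fun _ => pow_zero _),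
    ← Finsupp.mul_prod_erase' (β - Finsupp.single k 1 : ℕ+ →₀ ℕ) k (fun k n => (k : ℕ) ^ n)
      (fun _ => pow_zero _),
    erase_sub_single, apply_sub_single]
  have h2 : (β k - 1) + 1 = β k := Nat.succ_pred_eq_of_pos (Nat.pos_of_ne_zero hk)
  conv_rhs => rw [← h2]
  rw [pow_succ]
  ring

lemma factProd_sub_single (β : ℕ+ →₀ ℕ) (k : ℕ+) (hk : β k ≠ 0) :
    β k * factProd (β - Finsupp.single k 1) = factProd β := by
  unfold factProd
  rw [← Finsupp.mul_prod_erase' β k (fun _ n => n.factorial) (fun _ => rfl),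
    ← Finsupp.mul_prod_erase' (β - Finsupp.single k 1 : ℕ+ →₀ ℕ) k (fun _ n => n.factorial)
      (fun _ => rfl),
    erase_sub_single, apply_sub_single, ← mul_assoc,
    Nat.mul_factorial_pred hk]

lemma factProd_ne_zero (β : ℕ+ →₀ ℕ) : factProd β ≠ 0 := by
  unfold factProd Finsupp.prod
  exact Finset.prod_ne_zero_iff.mpr fun a _ => (Nat.factorial_pos _).ne'

lemma single_add_sub_single (β : ℕ+ →₀ ℕ) (k : ℕ+) (hk : β k ≠ 0) :
    Finsupp.single k 1 + (β - Finsupp.single k 1) = β := by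
  ext a
  rcases eq_or_ne a k with h | h
  · subst h
    simp [Finsupp.add_apply, Finsupp.tsub_apply]
    omega
  · simp [Finsupp.add_apply, Finsupp.tsub_apply, Finsupp.single_apply, h, Ne.symm h]

lemma eq_single_of_absSum_eq_one (β : ℕ+ →₀ ℕ) (hβ : absSum β = 1) :
    ∃ k : ℕ+, β = Finsupp.single k 1 := by
  have hs : β.support.Nonempty := by
    by_contra h
    rw [Finset.not_nonempty_iff_eq_empty, Finsupp.support_eq_empty] at h
    simp [h, absSum] at hβ
  obtain ⟨k, hk⟩ := hs
  have hkne : β k ≠ 0 := Finsupp.mem_support_iff.mp hk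
  have h1 : β k + absSum (Finsupp.erase k β) = 1 := by
    unfold absSum
    rw [Finsupp.add_sum_erase' β k (fun _ n => n) (fun _ => rfl)]
    exact hβ
  have hβk : β k = 1 := by omega
  have h0 : absSum (Finsupp.erase k β) = 0 := by omega
  have herase : Finsupp.erase k β = 0 := by
    ext a
    by_cases ha : a ∈ (Finsupp.erase k β).support
    · exact (Finset.sum_eq_zero_iff.mp h0) a ha
    · simpa using Finsupp.notMem_support_iff.mp ha
  refine ⟨k, ?_⟩
  rw [← Finsupp.single_add_erase k β, herase, add_zero, hβk]

lemma wtProd_single (k : ℕ+) : wtProd (Finsupp.single k 1) = k := by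
  unfold wtProd
  rw [show ((Finsupp.single k 1 : ℕ+ →₀ ℕ).prod fun k n => (k:ℕ) ^ n) = (k:ℕ) ^ 1 from
    Finsupp.prod_single_index (pow_zero _), pow_one]

lemma wtSum_single (k : ℕ+) : wtSum (Finsupp.single k 1) = k := by
  unfold wtSum
  rw [show ((Finsupp.single k 1 : ℕ+ →₀ ℕ).sum fun k n => (k:ℕ) * n) = (k:ℕ) * 1 from
    Finsupp.sum_single_index (mul_zero _), mul_one]

lemma factProd_single (k : ℕ+) : factProd (Finsupp.single k 1) = 1 := by
  unfold factProd
  rw [show ((Finsupp.single k 1 : ℕ+ →₀ ℕ).prod fun _ n => n.factorial) = Nat.factorial 1 from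
    Finsupp.prod_single_index rfl]
  rfl

/-- If `N` satisfies the Caporaso–Harris type recursion
`N(α,β) = Σ_{k : β_k > 0} k·N(α+e_k, β−e_k)` for `|β| > 1`, and the base case
`N(α, e_k) = k²·M(α+e_k)`, then `N(α,β) = I^β · Iβ · (|β|−1)!/β! · M(α+β)`
whenever `|β| ≥ 1`. -/
theorem stmt_1 (N : (ℕ+ →₀ ℕ) × (ℕ+ →₀ ℕ) → ℚ) (M : (ℕ+ →₀ ℕ) → ℚ)
    (hrec : ∀ α β : ℕ+ →₀ ℕ, 1 < absSum β →
      N (α, β) = ∑ k ∈ β.support,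
        (k : ℚ) * N (α + Finsupp.single k 1, β - Finsupp.single k 1))
    (hbase : ∀ (α : ℕ+ →₀ ℕ) (k : ℕ+),
      N (α, Finsupp.single k 1) = (k : ℚ) ^ 2 * M (α + Finsupp.single k 1)) :
    ∀ α β : ℕ+ →₀ ℕ, 1 ≤ absSum β →
      N (α, β) = (wtProd β : ℚ) * (wtSum β : ℚ) *
        ((absSum β - 1).factorial : ℚ) / (factProd β : ℚ) * M (α + β) := by
  suffices H : ∀ n : ℕ, ∀ α β : ℕ+ →₀ ℕ, absSum β = n + 1 →
      N (α, β) = (wtProd β : ℚ) * (wtSum β : ℚ) *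
        ((absSum β - 1).factorial : ℚ) / (factProd β : ℚ) * M (α + β) by
    intro α β hβ
    exact H (absSum β - 1) α β (by omega)
  intro n
  induction n with
  | zero =>
    intro α β hβ
    obtain ⟨k, rfl⟩ := eq_single_of_absSum_eq_one β hβ
    rw [hbase, wtProd_single, wtSum_single, factProd_single, hβ]
    rw [show ((1:ℕ) - 1).factorial = 1 from rfl]
    push_cast
    ring
  | succ n ih =>
    intro α β hβ
    rw [hrec α β (by omega)]
    set W : ℚ := (wtSum β : ℚ) with hW
    have hterm : ∀ k ∈ β.support, (k : ℚ) *
        N (α + Finsupp.single k 1, β - Finsupp.single k 1) =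
        (wtProd β : ℚ) * (n.factorial : ℚ) / (factProd β : ℚ) * M (α + β) *
          ((β k : ℚ) * (W - (k : ℚ))) := by
      intro k hk
      have hkne : β k ≠ 0 := Finsupp.mem_support_iff.mp hk
      have habs : absSum (β - Finsupp.single k 1) = n + 1 := by
        have := absSum_sub_single β k hkne; omega
      rw [ih (α + Finsupp.single k 1) (β - Finsupp.single k 1) habs]
      have hadd : α + Finsupp.single k 1 + (β - Finsupp.single k 1) = α + β := by
        rw [add_assoc, single_add_sub_single β k hkne]
      rw [hadd, habs]
      have hp : (wtProd β : ℚ) = (k : ℚ) * (wtProd (β - Finsupp.single k 1) : ℚ) := by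
        exact_mod_cast congrArg (Nat.cast : ℕ → ℚ) (wtProd_sub_single β k hkne).symm
      have hs : (wtSum (β - Finsupp.single k 1) : ℚ) = W - (k : ℚ) := by
        have h := congrArg (Nat.cast : ℕ → ℚ) (wtSum_sub_single β k hkne)
        push_cast at h ⊢
        linarith
      have hf : (factProd β : ℚ) =
          (β k : ℚ) * (factProd (β - Finsupp.single k 1) : ℚ) := by
        exact_mod_cast congrArg (Nat.cast : ℕ → ℚ) (factProd_sub_single β k hkne).symm
      have hfγ : (factProd (β - Finsupp.single k 1) : ℚ) ≠ 0 :=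
        Nat.cast_ne_zero.mpr (factProd_ne_zero _)
      have hβkQ : (β k : ℚ) ≠ 0 := Nat.cast_ne_zero.mpr hkne
      rw [hp, hf, hs]
      simp only [Nat.add_sub_cancel]
      field_simp
    rw [Finset.sum_congr rfl hterm, ← Finset.mul_sum]
    have hsum : ∑ k ∈ β.support, (β k : ℚ) * (W - (k : ℚ)) = W * ((n : ℚ) + 1) := by
      have hA : ∑ k ∈ β.support, (β k : ℚ) = ((n : ℚ) + 2) := by
        have h : ∑ k ∈ β.support, β k = n + 2 := hβ
        exact_mod_cast h
      have hWs : ∑ k ∈ β.support, (k : ℚ) * (β k : ℚ) = W := by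
        have h : ∑ k ∈ β.support, (k : ℕ) * β k = wtSum β := rfl
        rw [hW, ← h]
        push_cast
        rfl
      calc ∑ k ∈ β.support, (β k : ℚ) * (W - (k : ℚ))
          = W * (∑ k ∈ β.support, (β k : ℚ)) - ∑ k ∈ β.support, (k : ℚ) * (β k : ℚ) := by
            rw [Finset.mul_sum, ← Finset.sum_sub_distrib]
            exact Finset.sum_congr rfl fun k _ => by ring
        _ = W * ((n : ℚ) + 2) - W := by rw [hA, hWs]
        _ = W * ((n : ℚ) + 1) := by ring
    rw [hsum, hβ]
    have hfact : ((n + 1 + 1 - 1).factorial : ℚ) = ((n : ℚ) + 1) * (n.factorial : ℚ) := by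
      simp only [Nat.add_sub_cancel, Nat.factorial_succ]
      push_cast
      ring
    rw [hfact]
    ring
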